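/- Sequential Monte Carlo with auxiliary backward kernels (Del Moral–Doucet–Jasra weights): let S be a measurable space with σ-finite measure μ₀, let π_{n-1} and π_n be probability measures on S with densities f_{n-1} and f_n with respect to μ₀, and let K and L be Markov kernels on S with jointly measurable densities k(x|x') and l(x'|x) with respect to μ₀. Assume that f_{n-1}(x') k(x|x') > 0 whenever f_n(x) l(x'|x) > 0 (up to (μ₀⊗μ₀)-null sets), and define the weight w(x', x) := f_n(x) l(x'|x) / (f_{n-1}(x') k(x|x')) where the denominator is positive, and w := 0 otherwise. Then the measure π_n(dx) L(x, dx') on S × S is absolutely continuous with respect to π_{n-1}(dx') K(x', dx) with density w, and consequently, for every bounded measurable φ : S → ℝ, ∫∫ φ(x) w(x', x) K(x', dx) π_{n-1}(dx') = ∫ φ dπ_n. -/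

import Mathlib

open MeasureTheory ProbabilityTheory
open scoped ENNReal NNReal

lemma smc_aux_compProd_withDensity {S : Type*} [MeasurableSpace S]
    (μ0 : Measure S) [SigmaFinite μ0]
    (f : S → ℝ≥0∞) (hf : Measurable f)
    (g : S → S → ℝ≥0∞) (hg : Measurable (Function.uncurry g))
    (K : Kernel S S) [IsSFiniteKernel K]
    (hK : ∀ x', K x' = μ0.withDensity (g x')) :
    (μ0.withDensity f).compProd K
      = (μ0.prod μ0).withDensity (fun z => f z.1 * g z.1 z.2) := by
  ext s hs
  have hind : ∀ x' x : S, (Prod.mk x' ⁻¹' s).indicator (g x') x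
      = s.indicator (Function.uncurry g) (x', x) := by
    intro x' x
    by_cases hx : (x', x) ∈ s <;> simp [hx, Function.uncurry]
  have h1 : ∀ x', K x' (Prod.mk x' ⁻¹' s)
      = ∫⁻ x, s.indicator (Function.uncurry g) (x', x) ∂μ0 := by
    intro x'
    rw [hK x', withDensity_apply _ (measurable_prodMk_left hs),
      ← lintegral_indicator (measurable_prodMk_left hs) _]
    exact lintegral_congr fun x => hind x' x
  rw [Measure.compProd_apply hs, withDensity_apply _ hs]
  simp_rw [h1]
  rw [lintegral_withDensity_eq_lintegral_mul _ hf
      (Measurable.lintegral_prod_right' (hg.indicator hs))]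
  have h2 : ∫⁻ z in s, f z.1 * g z.1 z.2 ∂(μ0.prod μ0)
      = ∫⁻ z, s.indicator (fun z : S × S => f z.1 * g z.1 z.2) z ∂(μ0.prod μ0) := by
    rw [lintegral_indicator hs]
  have hm2 : Measurable fun z : S × S => f z.1 * g z.1 z.2 :=
    (hf.comp measurable_fst).mul hg
  rw [h2, MeasureTheory.lintegral_prod _ ((hm2.indicator hs).aemeasurable)]
  refine lintegral_congr fun x' => ?_
  simp only [Pi.mul_apply]
  have hgx : Measurable fun y => s.indicator (Function.uncurry g) (x', y) :=
    (hg.indicator hs).comp measurable_prodMk_left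
  rw [← lintegral_const_mul (f x') hgx]
  refine lintegral_congr fun x => ?_
  by_cases hx : (x', x) ∈ s
  · rw [Set.indicator_of_mem hx, Set.indicator_of_mem hx]; rfl
  · rw [Set.indicator_of_notMem hx, Set.indicator_of_notMem hx, mul_zero]

lemma smc_aux_map_swap_withDensity {S : Type*} [MeasurableSpace S]
    (ν : Measure (S × S)) (h : S × S → ℝ≥0∞) (hm : Measurable h) :
    (ν.withDensity h).map Prod.swap
      = (ν.map Prod.swap).withDensity (h ∘ Prod.swap) := by
  ext s hs
  rw [Measure.map_apply measurable_swap hs,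
    withDensity_apply _ (measurable_swap hs), withDensity_apply _ hs,
    setLIntegral_map hs (hm.comp measurable_swap) measurable_swap]
  rfl

theorem smc_auxiliary_backward_kernel_weights {S : Type*} [MeasurableSpace S]
    (μ0 : Measure S) [SigmaFinite μ0]
    (πp πn : Measure S) [IsProbabilityMeasure πp] [IsProbabilityMeasure πn]
    (fp fn : S → ℝ) (hfp0 : ∀ x, 0 ≤ fp x) (hfn0 : ∀ x, 0 ≤ fn x)
    (hfpm : Measurable fp) (hfnm : Measurable fn)
    (hπp : πp = μ0.withDensity fun x => ENNReal.ofReal (fp x))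
    (hπn : πn = μ0.withDensity fun x => ENNReal.ofReal (fn x))
    (K L : Kernel S S) [IsMarkovKernel K] [IsMarkovKernel L]
    (k l : S → S → ℝ) (hk0 : ∀ x' x, 0 ≤ k x' x) (hl0 : ∀ x x', 0 ≤ l x x')
    (hkm : Measurable (Function.uncurry k)) (hlm : Measurable (Function.uncurry l))
    (hK : ∀ x', K x' = μ0.withDensity fun x => ENNReal.ofReal (k x' x))
    (hL : ∀ x, L x = μ0.withDensity fun x' => ENNReal.ofReal (l x x'))
    (hpos : ∀ᵐ z ∂(μ0.prod μ0), 0 < fn z.2 * l z.2 z.1 → 0 < fp z.1 * k z.1 z.2)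
    (w : S → S → ℝ)
    (hw : w = fun x' x =>
      if 0 < fp x' * k x' x then fn x * l x x' / (fp x' * k x' x) else 0) :
    ((πn.compProd L).map Prod.swap) ≪ (πp.compProd K) ∧
    ((πn.compProd L).map Prod.swap) =
      (πp.compProd K).withDensity (fun z => ENNReal.ofReal (w z.1 z.2)) ∧
    ∀ (φ : S → ℝ) (C : ℝ), Measurable φ → (∀ s, |φ s| ≤ C) →
      ∫ x', ∫ x, φ x * w x' x ∂(K x') ∂πp = ∫ x, φ x ∂πn := by
  set ν := μ0.prod μ0 with hν
  set a : S × S → ℝ≥0∞ := fun z => ENNReal.ofReal (fp z.1) * ENNReal.ofReal (k z.1 z.2)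
    with ha
  set b : S × S → ℝ≥0∞ := fun z => ENNReal.ofReal (fn z.2) * ENNReal.ofReal (l z.2 z.1)
    with hb
  have hkm' : Measurable (Function.uncurry fun x' x => ENNReal.ofReal (k x' x)) :=
    hkm.ennreal_ofReal
  have hlm' : Measurable (Function.uncurry fun x x' => ENNReal.ofReal (l x x')) :=
    hlm.ennreal_ofReal
  have ham : Measurable a := (hfpm.ennreal_ofReal.comp measurable_fst).mul hkm'
  have hA : πp.compProd K = ν.withDensity a := by
    rw [hπp]
    exact smc_aux_compProd_withDensity μ0 _ hfpm.ennreal_ofReal _ hkm' K hK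
  have hBn : πn.compProd L
      = ν.withDensity (fun z => ENNReal.ofReal (fn z.1) * ENNReal.ofReal (l z.1 z.2)) := by
    rw [hπn]
    exact smc_aux_compProd_withDensity μ0 _ hfnm.ennreal_ofReal _ hlm' L hL
  have hdm : Measurable fun z : S × S => ENNReal.ofReal (fn z.1) * ENNReal.ofReal (l z.1 z.2) :=
    ((hfnm.comp measurable_fst).ennreal_ofReal).mul hlm'
  have hBswap : (πn.compProd L).map Prod.swap = ν.withDensity b := by
    rw [hBn, smc_aux_map_swap_withDensity _ _ hdm, Measure.prod_swap]
    rfl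
  -- measurability of w
  have hset : MeasurableSet {z : S × S | 0 < fp z.1 * k z.1 z.2} :=
    measurableSet_lt measurable_const ((hfpm.comp measurable_fst).mul hkm)
  have hwm : Measurable fun z : S × S => w z.1 z.2 := by
    rw [hw]
    exact Measurable.ite hset
      (((hfnm.comp measurable_snd).mul (hlm.comp measurable_swap)).div
        ((hfpm.comp measurable_fst).mul hkm)) measurable_const
  have hw'm : Measurable fun z : S × S => ENNReal.ofReal (w z.1 z.2) := hwm.ennreal_ofReal
  have hw0 : ∀ x' x, 0 ≤ w x' x := by
    intro x' x
    rw [hw]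
    dsimp only
    split
    · exact div_nonneg (mul_nonneg (hfn0 _) (hl0 _ _)) (le_of_lt (by assumption))
    · exact le_rfl
  -- the key a.e. density identity
  have hden : b =ᵐ[ν] (a * fun z => ENNReal.ofReal (w z.1 z.2)) := by
    filter_upwards [hpos] with z hz
    simp only [Pi.mul_apply, ha, hb]
    by_cases h : 0 < fp z.1 * k z.1 z.2
    · have hwz : w z.1 z.2 = fn z.2 * l z.2 z.1 / (fp z.1 * k z.1 z.2) := by
        rw [hw]; simp [h]
      have e1 : fn z.2 * l z.2 z.1
          = (fp z.1 * k z.1 z.2) * (fn z.2 * l z.2 z.1 / (fp z.1 * k z.1 z.2)) := by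
        rw [mul_div_assoc', mul_div_cancel_left₀ _ (ne_of_gt h)]
      calc ENNReal.ofReal (fn z.2) * ENNReal.ofReal (l z.2 z.1)
          = ENNReal.ofReal (fn z.2 * l z.2 z.1) := (ENNReal.ofReal_mul (hfn0 _)).symm
        _ = ENNReal.ofReal ((fp z.1 * k z.1 z.2)
              * (fn z.2 * l z.2 z.1 / (fp z.1 * k z.1 z.2))) := by rw [← e1]
        _ = ENNReal.ofReal (fp z.1 * k z.1 z.2)
              * ENNReal.ofReal (fn z.2 * l z.2 z.1 / (fp z.1 * k z.1 z.2)) :=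
            ENNReal.ofReal_mul (le_of_lt h)
        _ = ENNReal.ofReal (fp z.1) * ENNReal.ofReal (k z.1 z.2)
              * ENNReal.ofReal (w z.1 z.2) := by
            rw [ENNReal.ofReal_mul (hfp0 _), hwz]
    · have hnl : ¬ 0 < fn z.2 * l z.2 z.1 := fun hc => h (hz hc)
      have h0 : fn z.2 * l z.2 z.1 = 0 :=
        le_antisymm (not_lt.1 hnl) (mul_nonneg (hfn0 _) (hl0 _ _))
      have hwz : w z.1 z.2 = 0 := by rw [hw]; simp [h]
      rw [hwz, ← ENNReal.ofReal_mul (hfn0 _), h0]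
      simp
  -- part 2
  have h2 : ((πn.compProd L).map Prod.swap)
      = (πp.compProd K).withDensity (fun z => ENNReal.ofReal (w z.1 z.2)) := by
    rw [hBswap, hA, ← withDensity_mul _ ham hw'm]
    exact withDensity_congr_ae hden
  refine ⟨h2 ▸ withDensity_absolutelyContinuous _ _, h2, ?_⟩
  -- part 3
  intro φ C hφ hC
  have hne : Nonempty S := Measure.nonempty_of_neZero πn
  have hC0 : 0 ≤ C := le_trans (abs_nonneg _) (hC (Classical.arbitrary S))
  -- total mass of the reweighted measure
  have hmass : ∫⁻ z, ENNReal.ofReal (w z.1 z.2) ∂(πp.compProd K) = 1 := by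
    have h1 : ((πp.compProd K).withDensity (fun z => ENNReal.ofReal (w z.1 z.2))) Set.univ
        = ∫⁻ z, ENNReal.ofReal (w z.1 z.2) ∂(πp.compProd K) := by
      rw [withDensity_apply _ MeasurableSet.univ, Measure.restrict_univ]
    rw [← h1, ← h2, Measure.map_apply measurable_swap MeasurableSet.univ,
      Set.preimage_univ, Measure.compProd_apply_univ, measure_univ]
  have hint : Integrable (fun z : S × S => φ z.2 * w z.1 z.2) (πp.compProd K) := by
    constructor
    · exact ((hφ.comp measurable_snd).mul hwm).aestronglyMeasurable
    · refine lt_of_le_of_lt (lintegral_mono (g := fun z =>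
        ENNReal.ofReal C * ENNReal.ofReal (w z.1 z.2)) fun z => ?_) ?_
      · dsimp only
        rw [Real.enorm_eq_ofReal_abs, abs_mul, abs_of_nonneg (hw0 _ _),
          ENNReal.ofReal_mul (abs_nonneg _)]
        exact mul_le_mul_left (ENNReal.ofReal_le_ofReal (hC _)) _
      · rw [lintegral_const_mul _ hw'm, hmass, mul_one]
        exact ENNReal.ofReal_lt_top
  have step1 : ∫ x', ∫ x, φ x * w x' x ∂(K x') ∂πp
      = ∫ z : S × S, φ z.2 * w z.1 z.2 ∂(πp.compProd K) :=
    (Measure.integral_compProd hint).symm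
  have hwnn : Measurable fun z : S × S => (w z.1 z.2).toNNReal := hwm.real_toNNReal
  have step2 : ∫ z : S × S, φ z.2 * w z.1 z.2 ∂(πp.compProd K)
      = ∫ z : S × S, (w z.1 z.2).toNNReal • φ z.2 ∂(πp.compProd K) := by
    refine integral_congr_ae (Filter.Eventually.of_forall fun z => ?_)
    dsimp only
    rw [NNReal.smul_def, Real.coe_toNNReal _ (hw0 _ _), mul_comm, smul_eq_mul]
  have step3 : ∫ z : S × S, (w z.1 z.2).toNNReal • φ z.2 ∂(πp.compProd K)
      = ∫ z : S × S, φ z.2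
          ∂((πp.compProd K).withDensity fun z => ENNReal.ofReal (w z.1 z.2)) :=
    (integral_withDensity_eq_integral_smul hwnn (fun z : S × S => φ z.2)).symm
  have hφ2 : AEStronglyMeasurable (fun z : S × S => φ z.2)
      ((πn.compProd L).map Prod.swap) := (hφ.comp measurable_snd).aestronglyMeasurable
  have step5 : ∫ z : S × S, φ z.2 ∂((πn.compProd L).map Prod.swap)
      = ∫ z : S × S, φ z.1 ∂(πn.compProd L) := by
    rw [integral_map measurable_swap.aemeasurable hφ2]
    rfl
  have step6 : ∫ z : S × S, φ z.1 ∂(πn.compProd L) = ∫ x, φ x ∂πn := by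
    conv_rhs => rw [← Measure.fst_compProd πn L]
    rw [Measure.fst]
    have hφ1 : AEStronglyMeasurable φ ((πn.compProd L).map Prod.fst) :=
      hφ.aestronglyMeasurable
    exact (integral_map measurable_fst.aemeasurable hφ1).symm
  rw [step1, step2, step3, ← h2, step5, step6]
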